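/- In C^2 ⊗ C^2 ⊗ C^2, the tensor W = v ⊗ w ⊗ w + w ⊗ v ⊗ w + w ⊗ w ⊗ v, where {w, v} is a basis, has tensor rank 3 but is a limit of tensors of rank 2 (e.g., W = lim_{t→0} (1/t)((w + t v)^{⊗3} − w^{⊗3})); hence tensor rank is not lower semicontinuous and border rank of W equals 2. -/

import Mathlib

open scoped TensorProduct Topology

noncomputable def tensorRank3 {K V₁ V₂ V₃ : Type*} [Field K]
    [AddCommGroup V₁] [Module K V₁] [AddCommGroup V₂] [Module K V₂]
    [AddCommGroup V₃] [Module K V₃]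
    (T : V₁ ⊗[K] (V₂ ⊗[K] V₃)) : ℕ :=
  sInf {r | ∃ (a : Fin r → V₁) (b : Fin r → V₂) (c : Fin r → V₃),
    T = ∑ k, a k ⊗ₜ[K] (b k ⊗ₜ[K] c k)}


lemma noRank2 {V : Type*} [AddCommGroup V] [Module ℂ V]
    (B : Module.Basis (Fin 2) ℂ V) (a c d : Fin 2 → V)
    (h : (B 1) ⊗ₜ[ℂ] ((B 0) ⊗ₜ[ℂ] (B 0)) + (B 0) ⊗ₜ[ℂ] ((B 1) ⊗ₜ[ℂ] (B 0))
        + (B 0) ⊗ₜ[ℂ] ((B 0) ⊗ₜ[ℂ] (B 1))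
        = ∑ k : Fin 2, a k ⊗ₜ[ℂ] (c k ⊗ₜ[ℂ] d k)) : False := by
  set F : Fin 2 → Fin 2 → Fin 2 → (V ⊗[ℂ] (V ⊗[ℂ] V)) →ₗ[ℂ] ℂ :=
    fun i j l => TensorProduct.lift ((B.coord i).smulRight
      (TensorProduct.lift ((B.coord j).smulRight (B.coord l)))) with hF
  have hFt : ∀ i j l (x y z : V), F i j l (x ⊗ₜ[ℂ] (y ⊗ₜ[ℂ] z))
      = B.coord i x * (B.coord j y * B.coord l z) := by
    intro i j l x y z
    simp [hF, TensorProduct.lift.tmul, smul_eq_mul, mul_comm, mul_assoc, mul_left_comm]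
  have hE : ∀ i j l : Fin 2,
      B.coord i (B 1) * (B.coord j (B 0) * B.coord l (B 0))
      + B.coord i (B 0) * (B.coord j (B 1) * B.coord l (B 0))
      + B.coord i (B 0) * (B.coord j (B 0) * B.coord l (B 1))
      = ∑ k : Fin 2, B.coord i (a k) * (B.coord j (c k) * B.coord l (d k)) := by
    intro i j l
    have := congrArg (F i j l) h
    simpa [map_add, map_sum, hFt] using this
  have hcoord : ∀ i j : Fin 2, B.coord i (B j) = if i = j then 1 else 0 := by
    intro i j
    simp [Module.Basis.coord_apply, Module.Basis.repr_self, Finsupp.single_apply, eq_comm]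
  set a1 := B.coord 0 (a 0) with ha1; set a2 := B.coord 1 (a 0) with ha2
  set b1 := B.coord 0 (c 0) with hb1; set b2 := B.coord 1 (c 0) with hb2
  set c1 := B.coord 0 (d 0) with hc1; set c2 := B.coord 1 (d 0) with hc2
  set d1 := B.coord 0 (a 1) with hd1; set d2 := B.coord 1 (a 1) with hd2
  set e1 := B.coord 0 (c 1) with he1; set e2 := B.coord 1 (c 1) with he2
  set f1 := B.coord 0 (d 1) with hf1; set f2 := B.coord 1 (d 1) with hf2
  have h111 := hE 0 0 0; have h112 := hE 0 0 1
  have h121 := hE 0 1 0; have h211 := hE 1 0 0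
  have h122 := hE 0 1 1; have h212 := hE 1 0 1
  have h221 := hE 1 1 0; have h222 := hE 1 1 1
  simp only [hcoord, Fin.sum_univ_two] at h111 h112 h121 h211 h122 h212 h221 h222
  norm_num [-Module.Basis.coord_apply] at h111 h112 h121 h211 h122 h212 h221 h222
  -- now the polynomial contradiction
  set K := (a1*d2 - a2*d1)*(b1*e2 - b2*e1) with hK
  have hd1' : c1*f1*K = -1 := by
    linear_combination (exp := 1) (-(a2*b2*c1 + d2*e2*f1)) * h111 + (a2*b1*c1 + d2*e1*f1) * h121 + h211
  have h2 : c2*f2*K = 0 := by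
    linear_combination (-(a1*b1*c2 + d1*e1*f2)) * h222 + (a2*b1*c2 + d2*e1*f2) * h122
  have h3' : (c1+c2)*(f1+f2)*K = -1 := by
    linear_combination (-(a2*b2*(c1+c2) + d2*e2*(f1+f2))) * (h111 + h112)
      + (a2*b1*(c1+c2) + d2*e1*(f1+f2)) * (h121 + h122) + (h211 + h212) - (h221 + h222)
  have h3 : (c1*f2 + c2*f1)*K = 0 := by linear_combination h3' - hd1' - h2
  have hc2eq : c2 = c1^2*f2*K := by linear_combination -c1*h3 + c2*hd1'
  have hu : (c1*f2*K)^2 = 0 := by linear_combination -f2*K*hc2eq + h2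
  have hcf : c1*f2*K = 0 := by
    exact pow_eq_zero_iff (two_ne_zero) |>.mp hu
  have hc2z : c2 = 0 := by linear_combination hc2eq + c1*hcf
  have hf2z : f2 = 0 := by linear_combination f2*hd1' - f1*hcf
  have : (1:ℂ) = 0 := by linear_combination h112 + a1*b1*hc2z + d1*e1*hf2z
  exact one_ne_zero this


theorem stmt18 {V : Type*} [AddCommGroup V] [Module ℂ V]
    (b : Module.Basis (Fin 2) ℂ V) (w v : V) (hw : w = b 0) (hv : v = b 1) :
    (∀ φ : Module.Dual ℂ (V ⊗[ℂ] (V ⊗[ℂ] V)),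
      Filter.Tendsto
        (fun t : ℂ => φ (t⁻¹ •
          ((w + t • v) ⊗ₜ[ℂ] ((w + t • v) ⊗ₜ[ℂ] (w + t • v)) - w ⊗ₜ[ℂ] (w ⊗ₜ[ℂ] w))))
        (𝓝[≠] (0 : ℂ))
        (𝓝 (φ (v ⊗ₜ[ℂ] (w ⊗ₜ[ℂ] w) + w ⊗ₜ[ℂ] (v ⊗ₜ[ℂ] w) + w ⊗ₜ[ℂ] (w ⊗ₜ[ℂ] v))))) ∧
    tensorRank3 (v ⊗ₜ[ℂ] (w ⊗ₜ[ℂ] w) + w ⊗ₜ[ℂ] (v ⊗ₜ[ℂ] w) + w ⊗ₜ[ℂ] (w ⊗ₜ[ℂ] v)) = 3 := by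
  constructor
  · -- Part 1: the limit statement
    intro φ
    set W := v ⊗ₜ[ℂ] (w ⊗ₜ[ℂ] w) + w ⊗ₜ[ℂ] (v ⊗ₜ[ℂ] w) + w ⊗ₜ[ℂ] (w ⊗ₜ[ℂ] v) with hWdef
    set X := v ⊗ₜ[ℂ] (v ⊗ₜ[ℂ] w) + v ⊗ₜ[ℂ] (w ⊗ₜ[ℂ] v) + w ⊗ₜ[ℂ] (v ⊗ₜ[ℂ] v) with hXdef
    set Y := v ⊗ₜ[ℂ] (v ⊗ₜ[ℂ] v) with hYdef
    have key : ∀ t : ℂ,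
        (w + t • v) ⊗ₜ[ℂ] ((w + t • v) ⊗ₜ[ℂ] (w + t • v)) - w ⊗ₜ[ℂ] (w ⊗ₜ[ℂ] w)
          = t • W + (t^2) • X + (t^3) • Y := by
      intro t
      simp only [hWdef, hXdef, hYdef, TensorProduct.add_tmul, TensorProduct.tmul_add,
        ← TensorProduct.smul_tmul', TensorProduct.tmul_smul, smul_add, smul_smul]
      module
    have heq : ∀ t : ℂ, t ≠ 0 →
        φ (t⁻¹ • ((w + t • v) ⊗ₜ[ℂ] ((w + t • v) ⊗ₜ[ℂ] (w + t • v)) - w ⊗ₜ[ℂ] (w ⊗ₜ[ℂ] w)))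
          = φ W + t * φ X + t^2 * φ Y := by
      intro t ht
      rw [key t, map_smul]
      simp only [map_add, map_smul, smul_eq_mul]
      field_simp
    have hcont : Filter.Tendsto (fun t : ℂ => φ W + t * φ X + t^2 * φ Y)
        (𝓝[≠] (0 : ℂ)) (𝓝 (φ W)) := by
      have : Filter.Tendsto (fun t : ℂ => φ W + t * φ X + t^2 * φ Y) (𝓝 (0 : ℂ))
          (𝓝 (φ W + 0 * φ X + 0^2 * φ Y)) := by
        apply Filter.Tendsto.add
        apply Filter.Tendsto.add tendsto_const_nhds
        · exact (continuous_id.mul continuous_const).tendsto 0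
        · exact ((continuous_pow 2).mul continuous_const).tendsto 0
      simpa using this.mono_left nhdsWithin_le_nhds
    refine hcont.congr' ?_
    filter_upwards [self_mem_nhdsWithin] with t ht
    exact (heq t ht).symm
  · -- Part 2: rank is 3
    subst hw hv
    unfold tensorRank3
    have h3mem : 3 ∈ {r | ∃ (a : Fin r → V) (c : Fin r → V) (d : Fin r → V),
        (b 1) ⊗ₜ[ℂ] ((b 0) ⊗ₜ[ℂ] (b 0)) + (b 0) ⊗ₜ[ℂ] ((b 1) ⊗ₜ[ℂ] (b 0))
          + (b 0) ⊗ₜ[ℂ] ((b 0) ⊗ₜ[ℂ] (b 1)) = ∑ k, a k ⊗ₜ[ℂ] (c k ⊗ₜ[ℂ] d k)} := by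
      refine ⟨![b 1, b 0, b 0], ![b 0, b 1, b 0], ![b 0, b 0, b 1], ?_⟩
      simp [Fin.sum_univ_three]
    refine le_antisymm (Nat.sInf_le h3mem) (le_csInf ⟨3, h3mem⟩ ?_)
    rintro r ⟨a, c, d, hr⟩
    by_contra hlt
    push_neg at hlt
    interval_cases r
    · -- r = 0
      refine noRank2 b (fun _ => 0) (fun _ => 0) (fun _ => 0) ?_
      simp at hr ⊢
      exact hr
    · -- r = 1
      refine noRank2 b ![a 0, 0] ![c 0, 0] ![d 0, 0] ?_
      rw [hr]
      simp [Fin.sum_univ_two]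
    · -- r = 2
      exact noRank2 b a c d hr
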